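/- Let p be prime, C ⊂ 𝔽ₚⁿ a linear code of rank L, B an invertible real n×n matrix, Λ_c = Bℤⁿ, and Λ = B p⁻¹(g(C) + pℤⁿ) where g embeds 𝔽ₚ into ℤ componentwise. Then Λ is a lattice containing Λ_c, and the index of Λ_c in Λ equals p^L, i.e., |Λ/Λ_c| = p^L. -/
import Mathlib


/-- The coordinatewise reduction `ℤⁿ → 𝔽ₚⁿ` as an additive group homomorphism. -/
def intCastHom (p n : ℕ) : (Fin n → ℤ) →+ (Fin n → ZMod p) where
  toFun v := fun i => ((v i : ℤ) : ZMod p)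
  map_zero' := by funext i; simp
  map_add' v w := by funext i; simp

/-- The map `v ↦ B (p⁻¹ v)` from `ℤⁿ` into `ℝⁿ` as an additive group homomorphism. -/
noncomputable def scaledLatticeHom (p n : ℕ) (B : Matrix (Fin n) (Fin n) ℝ) :
    (Fin n → ℤ) →+ (Fin n → ℝ) where
  toFun v := B.mulVec (fun i => (v i : ℝ) / p)
  map_zero' := by
    have h : (fun i : Fin n => ((0 : Fin n → ℤ) i : ℝ) / p) = (0 : Fin n → ℝ) := by
      funext i; simp
    show B.mulVec _ = 0
    rw [h, Matrix.mulVec_zero]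
  map_add' v w := by
    have h : (fun i : Fin n => (((v + w) i : ℤ) : ℝ) / p) =
        (fun i : Fin n => ((v i : ℤ) : ℝ) / p) + (fun i : Fin n => ((w i : ℤ) : ℝ) / p) := by
      funext i
      simp [Pi.add_apply, add_div]
    show B.mulVec _ = B.mulVec _ + B.mulVec _
    rw [h, Matrix.mulVec_add]

/-- Construction A nesting and index: for a prime `p`, a linear code `C ⊆ 𝔽ₚⁿ` of rank
`L`, and an invertible real matrix `B`, the set `Λ = B p⁻¹ (g(C) + pℤⁿ)` (realized as
the image under `v ↦ B(p⁻¹ v)` of the preimage of `C` in `ℤⁿ`, which equals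
`g(C) + pℤⁿ`) is a lattice (an additive subgroup) containing `Λc = Bℤⁿ`, and the index
of `Λc` in `Λ` is `p^L`, i.e. `|Λ/Λc| = p^L`. -/
theorem constructionA_index
    (p n L : ℕ) (hp : p.Prime) (hL : L ≤ n)
    (B : Matrix (Fin n) (Fin n) ℝ) (hB : IsUnit B.det)
    (C : Submodule (ZMod p) (Fin n → ZMod p))
    (hC : Module.finrank (ZMod p) C = L)
    (Λ Λc : AddSubgroup (Fin n → ℝ))
    (hΛ : Λ = AddSubgroup.map (scaledLatticeHom p n B)
      (C.toAddSubgroup.comap (intCastHom p n)))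
    (hΛc : Λc = AddSubgroup.map (scaledLatticeHom p n B)
      ((⊥ : AddSubgroup (Fin n → ZMod p)).comap (intCastHom p n))) :
    Λc ≤ Λ ∧ Nat.card (Λ ⧸ Λc.addSubgroupOf Λ) = p ^ L := by

  subst hΛ hΛc
  haveI : Fact p.Prime := ⟨hp⟩
  set f := scaledLatticeHom p n B with hf
  have hpne : (p : ℝ) ≠ 0 := by exact_mod_cast hp.ne_zero
  have hfinj : Function.Injective f := by
    intro v w hvw
    have hB' : Function.Injective B.mulVec :=
      Matrix.mulVec_injective_iff_isUnit.mpr ((Matrix.isUnit_iff_isUnit_det B).mpr hB)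
    have h2 : (fun i => (v i : ℝ) / p) = (fun i => (w i : ℝ) / p) := hB' hvw
    funext i
    have h3 := congrFun h2 i
    field_simp at h3
    exact_mod_cast h3
  set M := C.toAddSubgroup.comap (intCastHom p n) with hM
  set K := ((⊥ : AddSubgroup (Fin n → ZMod p)).comap (intCastHom p n)) with hK
  have hmemK : ∀ x, x ∈ K ↔ intCastHom p n x = 0 := by
    intro x
    simp [hK, AddSubgroup.mem_comap]
  have hKM : K ≤ M := by
    intro x hx
    have : intCastHom p n x = 0 := (hmemK x).mp hx
    simp [hM, AddSubgroup.mem_comap, this]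
  refine ⟨AddSubgroup.map_mono hKM, ?_⟩
  -- the equivalence between M and its image
  let e : M ≃+ M.map f := AddSubgroup.equivMapOfInjective M f hfinj
  have he : (K.addSubgroupOf M).map e.toAddMonoidHom = (K.map f).addSubgroupOf (M.map f) := by
    ext x
    simp only [AddSubgroup.mem_map, AddSubgroup.mem_addSubgroupOf]
    constructor
    · rintro ⟨y, hy, rfl⟩
      exact AddSubgroup.mem_map.mpr ⟨y.1, hy, (AddSubgroup.coe_equivMapOfInjective_apply M f hfinj y).symm⟩
    · rintro hx
      rcases AddSubgroup.mem_map.mp hx with ⟨v, hv, hvx⟩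
      refine ⟨⟨v, hKM hv⟩, hv, ?_⟩
      exact Subtype.ext
        ((AddSubgroup.coe_equivMapOfInjective_apply M f hfinj ⟨v, hKM hv⟩).trans hvx)
  let eQ := QuotientAddGroup.congr (K.addSubgroupOf M) ((K.map f).addSubgroupOf (M.map f)) e he
  -- the reduction hom from M onto C
  let ψ : M →+ C.toAddSubgroup :=
    AddMonoidHom.codRestrict ((intCastHom p n).comp M.subtype) C.toAddSubgroup (fun x => x.2)
  have hψsurj : Function.Surjective ψ := by
    intro c
    refine ⟨⟨fun i => (ZMod.cast (c.1 i) : ℤ), ?_⟩, ?_⟩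
    · have : intCastHom p n (fun i => (ZMod.cast (c.1 i) : ℤ)) = c.1 := by
        funext i
        exact ZMod.intCast_zmod_cast (c.1 i)
      simp [hM, AddSubgroup.mem_comap, this, c.2]
    · apply Subtype.ext
      funext i
      exact ZMod.intCast_zmod_cast (c.1 i)
  have hψker : ψ.ker = K.addSubgroupOf M := by
    ext x
    simp only [AddMonoidHom.mem_ker, AddSubgroup.mem_addSubgroupOf]
    rw [hmemK]
    constructor
    · intro h
      have := congrArg (Subtype.val) h
      exact this
    · intro h
      exact Subtype.ext h
  have eK : (M ⧸ ψ.ker) ≃+ C.toAddSubgroup :=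
    QuotientAddGroup.quotientKerEquivOfSurjective ψ hψsurj
  have eQ2 : (M ⧸ K.addSubgroupOf M) ≃+ C.toAddSubgroup := by
    rw [← hψker]
    exact eK
  have hcard1 : Nat.card ((M.map f) ⧸ (K.map f).addSubgroupOf (M.map f))
      = Nat.card (M ⧸ K.addSubgroupOf M) := (Nat.card_congr eQ.symm.toEquiv)
  have hcard2 : Nat.card (M ⧸ K.addSubgroupOf M) = Nat.card C.toAddSubgroup :=
    Nat.card_congr eQ2.toEquiv
  have hCfin : Nat.card C.toAddSubgroup = p ^ L := by
    haveI : Fintype C := Fintype.ofFinite C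
    have : Fintype.card C = Fintype.card (ZMod p) ^ Module.finrank (ZMod p) C :=
      Module.card_eq_pow_finrank
    have hcc : Nat.card C.toAddSubgroup = Nat.card C := rfl
    rw [hcc, Nat.card_eq_fintype_card, this, ZMod.card, hC]
  rw [hcard1, hcard2, hCfin]
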